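/- Original Opial inequality: Let a > 0 and f ∈ C¹[0,a] with f(0) = f(a) = 0 and f(t) > 0 on (0,a). Then ∫₀ᵃ |f(t) f′(t)| dt ≤ (a/4) ∫₀ᵃ (f′(t))² dt. -/

import Mathlib

open intervalIntegral Set MeasureTheory

/-- Elementary Cauchy–Schwarz for interval integrals. -/
lemma cs_aux (l r : ℝ) (hlr : l ≤ r) (h : ℝ → ℝ)
    (h1 : IntervalIntegrable h volume l r)
    (h2 : IntervalIntegrable (fun t => h t ^ 2) volume l r) :
    (∫ t in l..r, h t) ^ 2 ≤ (r - l) * ∫ t in l..r, h t ^ 2 := by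
  rcases eq_or_lt_of_le hlr with rfl | hlt
  · simp
  have hc0 : 0 < r - l := by linarith
  set lam : ℝ := (∫ t in l..r, h t) / (r - l) with hlam
  have key : 0 ≤ ∫ t in l..r, (h t - lam) ^ 2 :=
    intervalIntegral.integral_nonneg hlr (fun t _ => sq_nonneg _)
  have expand : ∫ t in l..r, (h t - lam) ^ 2
      = (∫ t in l..r, h t ^ 2) - 2 * lam * (∫ t in l..r, h t) + (r - l) * lam ^ 2 := by
    have e : ∀ t, (h t - lam) ^ 2 = h t ^ 2 - (2 * lam) * h t + lam ^ 2 := fun t => by ring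
    simp_rw [e]
    rw [intervalIntegral.integral_add (h2.sub (h1.const_mul _)) intervalIntegrable_const,
      intervalIntegral.integral_sub h2 (h1.const_mul _),
      intervalIntegral.integral_const_mul, intervalIntegral.integral_const]
    ring_nf
  rw [expand] at key
  have hIc : lam * (r - l) = ∫ t in l..r, h t := by
    rw [hlam, div_mul_cancel₀ _ hc0.ne']
  nlinarith [key, hIc, sq_nonneg lam, mul_pos hc0 hc0]

/-- Original Opial inequality. -/
theorem opial_original (a : ℝ) (ha : 0 < a) (f f' : ℝ → ℝ)
    (hderiv : ∀ t ∈ Set.Icc (0:ℝ) a, HasDerivAt f (f' t) t)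
    (hf'c : ContinuousOn f' (Set.Icc (0:ℝ) a))
    (hf0 : f 0 = 0) (hfa : f a = 0)
    (hpos : ∀ t ∈ Set.Ioo (0:ℝ) a, 0 < f t) :
    ∫ t in (0:ℝ)..a, |f t * f' t| ≤ (a / 4) * ∫ t in (0:ℝ)..a, (f' t) ^ 2 := by
  set c : ℝ := a / 2 with hc
  have hc0 : 0 < c := by positivity
  have hc0' : (0:ℝ) ≤ c := hc0.le
  have hca : c < a := by simp only [hc]; linarith
  have h0m : (0:ℝ) ∈ Icc (0:ℝ) a := ⟨le_rfl, ha.le⟩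
  have ham : a ∈ Icc (0:ℝ) a := ⟨ha.le, le_rfl⟩
  have hcm : c ∈ Icc (0:ℝ) a := ⟨hc0', hca.le⟩
  have hfc : ContinuousOn f (Icc 0 a) := fun t ht =>
    (hderiv t ht).continuousAt.continuousWithinAt
  set g : ℝ → ℝ := fun t => |f' t| with hgdef
  have hgc : ContinuousOn g (Icc 0 a) := hf'c.abs
  have hgnn : ∀ t, 0 ≤ g t := fun t => abs_nonneg _
  -- generic interval integrability
  have hint : ∀ (h : ℝ → ℝ), ContinuousOn h (Icc 0 a) → ∀ l r : ℝ, l ∈ Icc (0:ℝ) a →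
      r ∈ Icc (0:ℝ) a → IntervalIntegrable h volume l r := fun h hh l r hl hr =>
    (hh.mono (Set.uIcc_subset_Icc hl hr)).intervalIntegrable
  set y : ℝ → ℝ := fun t => ∫ s in (0:ℝ)..t, g s with hydef
  have hyc : ContinuousOn y (Icc 0 a) := by
    have hGi : IntegrableOn g (uIcc 0 a) volume := by
      rw [Set.uIcc_of_le ha.le]
      exact hgc.integrableOn_Icc
    have := intervalIntegral.continuousOn_primitive_interval hGi
    rwa [Set.uIcc_of_le ha.le] at this
  have hy : ∀ t ∈ Ioo (0:ℝ) a, HasDerivAt y (g t) t := by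
    intro t ht
    exact intervalIntegral.integral_hasDerivAt_right
      (hint g hgc 0 t h0m ⟨ht.1.le, ht.2.le⟩)
      (ContinuousOn.stronglyMeasurableAtFilter isOpen_Ioo (hgc.mono Ioo_subset_Icc_self) t ht)
      ((hgc t (Ioo_subset_Icc_self ht)).continuousAt (Icc_mem_nhds ht.1 ht.2))
  -- FTC for f
  have hftc : ∀ t ∈ Icc (0:ℝ) a, f t = ∫ s in (0:ℝ)..t, f' s := by
    intro t ht
    have := intervalIntegral.integral_eq_sub_of_hasDerivAt
      (f := f) (f' := f')
      (fun s hs => hderiv s (Set.uIcc_subset_Icc h0m ht hs))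
      (hint f' hf'c 0 t h0m ht)
    rw [hf0, sub_zero] at this
    exact this.symm
  have hftc2 : ∀ t ∈ Icc (0:ℝ) a, f t = -∫ s in t..a, f' s := by
    intro t ht
    have := intervalIntegral.integral_eq_sub_of_hasDerivAt
      (f := f) (f' := f')
      (fun s hs => hderiv s (Set.uIcc_subset_Icc ht ham hs))
      (hint f' hf'c t a ht ham)
    rw [hfa, zero_sub] at this
    rw [this, neg_neg]
  have hfy : ∀ t ∈ Icc (0:ℝ) a, |f t| ≤ y t := by
    intro t ht
    rw [hftc t ht]
    exact intervalIntegral.abs_integral_le_integral_abs ht.1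
  set G : ℝ := ∫ s in (0:ℝ)..a, g s with hGdef
  set z : ℝ → ℝ := fun t => G - y t with hzdef
  have hzeq : ∀ t ∈ Icc (0:ℝ) a, z t = ∫ s in t..a, g s := by
    intro t ht
    have := intervalIntegral.integral_add_adjacent_intervals
      (hint g hgc 0 t h0m ht) (hint g hgc t a ht ham)
    simp only [hzdef, hGdef, hydef]
    linarith [this]
  have hfz : ∀ t ∈ Icc (0:ℝ) a, |f t| ≤ z t := by
    intro t ht
    rw [hftc2 t ht, abs_neg, hzeq t ht]
    exact intervalIntegral.abs_integral_le_integral_abs ht.2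
  have hzc : ContinuousOn z (Icc 0 a) := continuousOn_const.sub hyc
  have hz : ∀ t ∈ Ioo (0:ℝ) a, HasDerivAt z (-(g t)) t := fun t ht =>
    (hy t ht).const_sub G
  -- Part 1 : on [0, c]
  have hIcc0c : Icc (0:ℝ) c ⊆ Icc 0 a := Icc_subset_Icc le_rfl hca.le
  have key1 : ∫ t in (0:ℝ)..c, y t * g t = y c ^ 2 / 2 := by
    have hd : ∀ t ∈ Ioo (0:ℝ) c, HasDerivWithinAt (fun u => y u ^ 2 / 2) (y t * g t) (Ioi t) t := by
      intro t ht
      have ht' : t ∈ Ioo (0:ℝ) a := ⟨ht.1, ht.2.trans hca⟩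
      have h1 := ((hy t ht').mul (hy t ht')).div_const 2
      have : g t * y t + y t * g t = 2 * (y t * g t) := by ring
      rw [this] at h1
      have h2 : HasDerivAt (fun u => y u * y u / 2) (y t * g t) t := by
        exact h1.congr_deriv (by ring)
      have h3 : HasDerivAt (fun u => y u ^ 2 / 2) (y t * g t) t := by
        convert h2 using 2 with u; ring
      exact h3.hasDerivWithinAt
    have hcont : ContinuousOn (fun u => y u ^ 2 / 2) (Icc 0 c) :=
      (((hyc.mono hIcc0c).pow 2).div_const 2)
    have hii : IntervalIntegrable (fun t => y t * g t) volume 0 c :=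
      hint _ (hyc.mul hgc) 0 c h0m hcm
    have := intervalIntegral.integral_eq_sub_of_hasDeriv_right_of_le hc0' hcont hd hii
    have hy0 : y 0 = 0 := intervalIntegral.integral_same
    rw [this, hy0]
    ring
  have bound1 : ∫ t in (0:ℝ)..c, |f t * f' t| ≤ ∫ t in (0:ℝ)..c, y t * g t := by
    apply intervalIntegral.integral_mono_on hc0'
      (hint _ ((hfc.mul hf'c).abs) 0 c h0m hcm)
      (hint _ (hyc.mul hgc) 0 c h0m hcm)
    intro t ht
    rw [Pi.mul_apply, Pi.mul_apply, abs_mul]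
    exact mul_le_mul_of_nonneg_right (hfy t (hIcc0c ht)) (hgnn t)
  have cs1 : y c ^ 2 ≤ c * ∫ t in (0:ℝ)..c, f' t ^ 2 := by
    have h2c : ContinuousOn (fun t => g t ^ 2) (Icc 0 a) := hgc.pow 2
    have := cs_aux 0 c hc0' g (hint g hgc 0 c h0m hcm) (hint _ h2c 0 c h0m hcm)
    have heq : ∀ t : ℝ, g t ^ 2 = f' t ^ 2 := fun t => sq_abs _
    simp_rw [heq] at this
    simpa using this
  -- Part 2 : on [c, a]
  have hIccca : Icc c a ⊆ Icc 0 a := Icc_subset_Icc hc0' le_rfl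
  have key2 : ∫ t in c..a, z t * g t = z c ^ 2 / 2 := by
    have hd : ∀ t ∈ Ioo c a, HasDerivWithinAt (fun u => z u ^ 2 / 2) (-(z t * g t)) (Ioi t) t := by
      intro t ht
      have ht' : t ∈ Ioo (0:ℝ) a := ⟨hc0.trans ht.1, ht.2⟩
      have h1 := ((hz t ht').mul (hz t ht')).div_const 2
      have : (-(g t) * z t + z t * -(g t)) / 2 = -(z t * g t) := by ring
      rw [this] at h1
      have h3 : HasDerivAt (fun u => z u ^ 2 / 2) (-(z t * g t)) t := by
        have e : (fun u => z u ^ 2 / 2) = fun x => (z * z) x / 2 := by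
          funext u; simp only [Pi.mul_apply]; ring
        rw [e]; exact h1
      exact h3.hasDerivWithinAt
    have hcont : ContinuousOn (fun u => z u ^ 2 / 2) (Icc c a) :=
      (((hzc.mono hIccca).pow 2).div_const 2)
    have hii : IntervalIntegrable (fun t => -(z t * g t)) volume c a :=
      (hint _ (hzc.mul hgc) c a hcm ham).neg
    have heq := intervalIntegral.integral_eq_sub_of_hasDeriv_right_of_le hca.le hcont hd hii
    have hza : z a = 0 := by
      rw [hzeq a ham, intervalIntegral.integral_same]
    rw [intervalIntegral.integral_neg] at heq
    rw [hza] at heq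
    have : -(∫ t in c..a, z t * g t) = -(z c ^ 2 / 2) := by rw [heq]; ring
    linarith [this]
  have bound2 : ∫ t in c..a, |f t * f' t| ≤ ∫ t in c..a, z t * g t := by
    apply intervalIntegral.integral_mono_on hca.le
      (hint _ ((hfc.mul hf'c).abs) c a hcm ham)
      (hint _ (hzc.mul hgc) c a hcm ham)
    intro t ht
    rw [Pi.mul_apply, Pi.mul_apply, abs_mul]
    exact mul_le_mul_of_nonneg_right (hfz t (hIccca ht)) (hgnn t)
  have cs2 : z c ^ 2 ≤ c * ∫ t in c..a, f' t ^ 2 := by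
    have h2c : ContinuousOn (fun t => g t ^ 2) (Icc 0 a) := hgc.pow 2
    have := cs_aux c a hca.le g (hint g hgc c a hcm ham) (hint _ h2c c a hcm ham)
    have heq : ∀ t : ℝ, g t ^ 2 = f' t ^ 2 := fun t => sq_abs _
    simp_rw [heq] at this
    rw [hzeq c hcm]
    have hac : a - c = c := by simp only [hc]; ring
    rwa [hac] at this
  -- Combine
  have split1 : ∫ t in (0:ℝ)..a, |f t * f' t|
      = (∫ t in (0:ℝ)..c, |f t * f' t|) + ∫ t in c..a, |f t * f' t| :=
    (intervalIntegral.integral_add_adjacent_intervals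
      (hint _ ((hfc.mul hf'c).abs) 0 c h0m hcm)
      (hint _ ((hfc.mul hf'c).abs) c a hcm ham)).symm
  have split2 : ∫ t in (0:ℝ)..a, f' t ^ 2
      = (∫ t in (0:ℝ)..c, f' t ^ 2) + ∫ t in c..a, f' t ^ 2 :=
    (intervalIntegral.integral_add_adjacent_intervals
      (hint _ (hf'c.pow 2) 0 c h0m hcm)
      (hint _ (hf'c.pow 2) c a hcm ham)).symm
  have hc2 : a / 4 = c / 2 := by simp only [hc]; ring
  rw [split1, split2, hc2]
  have e1 := bound1.trans (le_of_eq key1)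
  have e2 := bound2.trans (le_of_eq key2)
  calc (∫ t in (0:ℝ)..c, |f t * f' t|) + ∫ t in c..a, |f t * f' t|
      ≤ y c ^ 2 / 2 + z c ^ 2 / 2 := add_le_add e1 e2
    _ ≤ (c * ∫ t in (0:ℝ)..c, f' t ^ 2) / 2 + (c * ∫ t in c..a, f' t ^ 2) / 2 :=
        add_le_add ((div_le_div_iff_of_pos_right (by norm_num)).mpr cs1) ((div_le_div_iff_of_pos_right (by norm_num)).mpr cs2)
    _ = c / 2 * ((∫ t in (0:ℝ)..c, f' t ^ 2) + ∫ t in c..a, f' t ^ 2) := by ring
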